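/- Let k ≥ 2, t ≥ 1, and n be natural numbers, and let C ⊆ 𝔽₂^n be a set of binary vectors with |C| = 2^k such that any two distinct elements of C have Hamming distance at least 2t+1. Then n − k > 2t; that is, any binary code of dimension k ≥ 2 and minimum distance 2t+1 requires strictly more than 2t redundancy symbols. -/

import Mathlib

open Finset

lemma sum_choose_pascal (n t : ℕ) :
    ∑ j ∈ range (t+1), (n+1).choose j
      = ∑ j ∈ range (t+1), n.choose j + ∑ j ∈ range t, n.choose j := by
  rw [Finset.sum_range_succ', Finset.sum_range_succ' (fun j => n.choose j) t]
  simp only [Nat.choose_succ_succ, Nat.choose_zero_right, Finset.sum_add_distrib]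
  ring

lemma sum_choose_mono (n t : ℕ) :
    ∑ j ∈ range (t+1), n.choose j ≤ ∑ j ∈ range (t+1), (n+1).choose j := by
  rw [sum_choose_pascal]; omega

lemma sum_choose_gt (t : ℕ) (ht : 1 ≤ t) : ∀ n, 3*t+2 ≤ n → 4^t < ∑ j ∈ range (t+1), n.choose j := by
  induction t with
  | zero => omega
  | succ t ih =>
    intro n hn
    show 4 ^ (t+1) < ∑ j ∈ range (t+2), n.choose j
    rcases t.eq_zero_or_pos with rfl | ht'
    · have hs : ∑ j ∈ range (0+2), n.choose j = 1 + n := by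
        norm_num [sum_range_succ]
      have h4 : (4:ℕ)^(0+1) = 4 := by norm_num
      omega
    · obtain ⟨m, rfl⟩ : ∃ m, n = m + 3 := ⟨n - 3, by omega⟩
      have hm : 3*t+2 ≤ m := by omega
      have IH := ih ht' m hm
      have h1 : ∑ j ∈ range (t+2), (m+3).choose j
          = ∑ j ∈ range (t+2), (m+2).choose j + ∑ j ∈ range (t+1), (m+2).choose j :=
        sum_choose_pascal (m+2) (t+1)
      have h2 : ∑ j ∈ range (t+2), (m+2).choose j
          = ∑ j ∈ range (t+2), (m+1).choose j + ∑ j ∈ range (t+1), (m+1).choose j :=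
        sum_choose_pascal (m+1) (t+1)
      have h3 : ∑ j ∈ range (t+2), (m+1).choose j
          = ∑ j ∈ range (t+2), m.choose j + ∑ j ∈ range (t+1), m.choose j :=
        sum_choose_pascal m (t+1)
      have h4 : ∑ j ∈ range (t+1), (m+1).choose j ≤ ∑ j ∈ range (t+1), (m+2).choose j :=
        sum_choose_mono (m+1) t
      have h5 := sum_choose_mono m t
      have h6 : ∑ j ∈ range (t+1), m.choose j ≤ ∑ j ∈ range (t+2), m.choose j :=
        sum_le_sum_of_subset (range_subset_range.2 (by omega))
      have h7 : 4 ^ (t+1) = 4 * 4 ^ t := by ring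
      omega

lemma zmod2_cases : ∀ a : ZMod 2, a = 0 ∨ a = 1 := by decide

lemma card_hammingNorm_eq (n j : ℕ) :
    ((univ : Finset (Fin n → ZMod 2)).filter fun x => hammingNorm x = j).card = n.choose j := by
  have key : ((univ : Finset (Fin n → ZMod 2)).filter fun x => hammingNorm x = j).card
      = (Finset.powersetCard j (univ : Finset (Fin n))).card := by
    apply Finset.card_nbij' (i := fun x => univ.filter fun i => x i ≠ 0)
      (j := fun s => fun i => if i ∈ s then (1 : ZMod 2) else 0)
    · intro x hx
      simp only [mem_coe, mem_filter, mem_univ, true_and] at hx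
      rw [Finset.mem_coe, Finset.mem_powersetCard_univ]
      exact hx
    · intro s hs
      rw [Finset.mem_coe, Finset.mem_powersetCard_univ] at hs
      simp only [mem_coe, mem_filter, mem_univ, true_and]
      rw [← hs]
      unfold hammingNorm
      congr 1
      ext i
      by_cases h : i ∈ s <;> simp [h]
    · intro x hx
      funext i
      rcases zmod2_cases (x i) with h | h <;> simp [h]
    · intro s hs
      ext i
      by_cases h : i ∈ s <;> simp [h]
  rw [key, Finset.card_powersetCard, card_univ, Fintype.card_fin]

lemma card_ball_zero (n t : ℕ) :
    ((univ : Finset (Fin n → ZMod 2)).filter fun x => hammingNorm x ≤ t).card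
      = ∑ j ∈ range (t+1), n.choose j := by
  have hsplit : ((univ : Finset (Fin n → ZMod 2)).filter fun x => hammingNorm x ≤ t)
      = (range (t+1)).biUnion fun j => univ.filter fun x => hammingNorm x = j := by
    ext x
    simp [Nat.lt_succ_iff]
  rw [hsplit, Finset.card_biUnion]
  · exact Finset.sum_congr rfl fun j _ => card_hammingNorm_eq n j
  · intro a _ b _ hab
    rw [Function.onFun, Finset.disjoint_left]
    intro x hx hx'
    simp only [mem_filter] at hx hx'
    exact hab (hx.2 ▸ hx'.2 ▸ rfl)

lemma card_ball (n t : ℕ) (c : Fin n → ZMod 2) :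
    ((univ : Finset (Fin n → ZMod 2)).filter fun x => hammingDist x c ≤ t).card
      = ∑ j ∈ range (t+1), n.choose j := by
  rw [← card_ball_zero n t]
  apply Finset.card_nbij' (i := fun x => x - c) (j := fun y => y + c)
  · intro x hx
    simp only [mem_coe, mem_filter, mem_univ, true_and] at hx ⊢
    rwa [← neg_add_eq_sub, ← hammingDist_eq_hammingNorm, hammingDist_comm]
  · intro y hy
    simp only [mem_coe, mem_filter, mem_univ, true_and] at hy ⊢
    rwa [hammingDist_comm, hammingDist_eq_hammingNorm, neg_add_eq_sub, add_sub_cancel_right]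
  · intro x _; simp
  · intro y _; simp

lemma zmod2_trans : ∀ x y z : ZMod 2, x ≠ y → y ≠ z → x = z := by decide

lemma three_dist_le (n : ℕ) (a b c : Fin n → ZMod 2) :
    hammingDist a b + hammingDist b c + hammingDist a c ≤ 2 * n := by
  have h : ∀ x y : Fin n → ZMod 2,
      hammingDist x y = ∑ i, if x i ≠ y i then 1 else 0 := fun x y => by
    rw [show hammingDist x y = (univ.filter fun i => x i ≠ y i).card from rfl,
      Finset.card_filter]
  rw [h, h, h, ← Finset.sum_add_distrib, ← Finset.sum_add_distrib]
  calc ∑ i : Fin n, ((if a i ≠ b i then 1 else 0) + (if b i ≠ c i then 1 else 0)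
          + (if a i ≠ c i then 1 else 0))
      ≤ ∑ _i : Fin n, 2 := by
        apply Finset.sum_le_sum
        intro i _
        rcases zmod2_cases (a i) with ha | ha <;> rcases zmod2_cases (b i) with hb | hb <;>
          rcases zmod2_cases (c i) with hc | hc <;> simp only [ha, hb, hc] <;> decide
    _ = 2 * n := by simp [mul_comm]

/-- Any binary code of length `n`, size `2^k` with `k ≥ 2`, and minimum
distance `2t+1` has redundancy strictly greater than `2t`. -/
theorem binary_code_redundancy_gt (k t n : ℕ) (hk : 2 ≤ k) (ht : 1 ≤ t)
    (C : Finset (Fin n → ZMod 2)) (hcard : C.card = 2 ^ k)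
    (hdist : ∀ c₁ ∈ C, ∀ c₂ ∈ C, c₁ ≠ c₂ → 2 * t + 1 ≤ hammingDist c₁ c₂) :
    2 * t < n - k := by
  -- C has at least 4 elements
  have hC4 : 4 ≤ C.card := by
    calc (4:ℕ) = 2^2 := by norm_num
    _ ≤ 2^k := Nat.pow_le_pow_right (by norm_num) hk
    _ = C.card := hcard.symm
  -- three distinct codewords
  obtain ⟨c₁, hc₁⟩ := Finset.card_pos.1 (show 0 < C.card by omega)
  obtain ⟨c₂, hc₂, h21⟩ := Finset.exists_mem_ne (show 1 < C.card by omega) c₁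
  have herase : 1 < (C.erase c₁).card := by
    rw [Finset.card_erase_of_mem hc₁]; omega
  obtain ⟨c₃, hc₃', h32⟩ := Finset.exists_mem_ne herase c₂
  have hc₃ : c₃ ∈ C := Finset.mem_of_mem_erase hc₃'
  have h31 : c₃ ≠ c₁ := Finset.ne_of_mem_erase hc₃'
  -- n ≥ 3t + 2
  have d12 := hdist c₁ hc₁ c₂ hc₂ (Ne.symm h21)
  have d23 := hdist c₂ hc₂ c₃ hc₃ (Ne.symm h32)
  have d13 := hdist c₁ hc₁ c₃ hc₃ (Ne.symm h31)
  have hsum := three_dist_le n c₁ c₂ c₃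
  have hn : 3 * t + 2 ≤ n := by omega
  -- sphere packing
  set V := ∑ j ∈ range (t+1), n.choose j with hV
  set B : (Fin n → ZMod 2) → Finset (Fin n → ZMod 2) :=
    fun c => univ.filter fun x => hammingDist x c ≤ t with hB
  have hdisj : ∀ c₁' ∈ C, ∀ c₂' ∈ C, c₁' ≠ c₂' → Disjoint (B c₁') (B c₂') := by
    intro a ha b hb hab
    rw [Finset.disjoint_left]
    intro x hx hx'
    simp only [hB, mem_filter, mem_univ, true_and] at hx hx'
    have htri := hammingDist_triangle a x b
    rw [hammingDist_comm a x] at htri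
    have := hdist a ha b hb hab
    omega
  have hpack : C.card * V ≤ 2 ^ n := by
    have hb : (C.biUnion B).card = ∑ c ∈ C, (B c).card :=
      Finset.card_biUnion fun a ha b hb hab => hdisj a ha b hb hab
    have hballs : ∑ c ∈ C, (B c).card = C.card * V := by
      rw [Finset.sum_congr rfl fun c _ => card_ball n t c, Finset.sum_const, smul_eq_mul]
    have hle : (C.biUnion B).card ≤ Fintype.card (Fin n → ZMod 2) :=
      Finset.card_le_univ _
    have hcardfun : Fintype.card (Fin n → ZMod 2) = 2 ^ n := by
      rw [Fintype.card_fun, ZMod.card, Fintype.card_fin]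
    omega
  have hVgt : 4 ^ t < V := sum_choose_gt t ht n hn
  have hkey : 2 ^ (k + 2 * t) < 2 ^ n := by
    calc 2 ^ (k + 2 * t) = 2 ^ k * 4 ^ t := by
          rw [pow_add, pow_mul]; norm_num
      _ < 2 ^ k * V :=
          mul_lt_mul_of_pos_left hVgt (pow_pos (by norm_num) k)
      _ ≤ 2 ^ n := by rw [← hcard]; exact hpack
  have : k + 2 * t < n := by
    exact (Nat.pow_lt_pow_iff_right (by norm_num)).1 hkey
  omega
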